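/- For n×n variables, the determinant det( binom(t+i-1, a_i-j) )_{1≤i,j≤n}, where a_1 < ... < a_n with a_i ≤ 2i-1, is a polynomial in t of degree d = Σ(a_i - i) with leading coefficient equal to det( 1/(a_i - j)! ) = 1/H_{Y(a)}. -/

import Mathlib

/-- The hook length of the box `u` in the cell set `c`. -/
def hookLen (c : Finset (ℕ × ℕ)) (u : ℕ × ℕ) : ℕ :=
  (c.filter fun v => v.1 = u.1 ∧ u.2 ≤ v.2).card +
  (c.filter fun v => v.2 = u.2 ∧ u.1 < v.1).card

/-- The product of all hook lengths of a cell set. -/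
def hookProd (c : Finset (ℕ × ℕ)) : ℕ := ∏ u ∈ c, hookLen c u

/-- Totalization of a sequence `a : Fin n → ℕ` to `ℕ → ℕ` (value `0` out of range). -/
def extSeq (n : ℕ) (a : Fin n → ℕ) : ℕ → ℕ := fun m => if h : m < n then a ⟨m, h⟩ else 0

/-- The Young diagram `Y(a)` associated to a sequence `a₁ < ⋯ < aₙ`:
its `(n+1-i)`-th row from the top has `aᵢ - i` boxes. Rows and columns are 0-indexed. -/
def cellsOf (n : ℕ) (a : Fin n → ℕ) : Finset (ℕ × ℕ) :=
  ((Finset.range n) ×ˢ (Finset.range (2 * n))).filter fun u =>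
    u.2 < extSeq n a (n - 1 - u.1) - (n - u.1)


open Finset

lemma prod_Icc_id_fact (m : ℕ) : (∏ x ∈ Icc 1 m, x) = Nat.factorial m := by
  induction m with
  | zero => simp
  | succ m ih =>
    rw [Finset.prod_Icc_succ_top (by omega), ih, Nat.factorial_succ, mul_comm]

lemma row_identity (i : ℕ) (b : ℕ → ℕ)
    (hb1 : ∀ k, k ≤ i → k + 1 ≤ b k)
    (hmono : ∀ k k', k ≤ k' → k' ≤ i → b k + (k' - k) ≤ b k') :
    (∏ c ∈ range (b i - (i+1)),
      ((b i - (i+1) - c) + ((range i).filter (fun k => c < b k - (k+1))).card)) *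
      ∏ k ∈ range i, (b i - b k) = Nat.factorial (b i - 1) := by
  set A := b i - (i+1) with hA
  set h : ℕ → ℕ := fun c => (A - c) + ((range i).filter (fun k => c < b k - (k+1))).card with hh
  set g : ℕ → ℕ := fun k => b i - b k with hg
  have hbi : i + 1 ≤ b i := hb1 i le_rfl
  have hlen : ∀ k k', k ≤ k' → k' ≤ i → b k - (k+1) ≤ b k' - (k'+1) := by
    intro k k' hkk' hk'i
    have := hmono k k' hkk' hk'i
    have := hb1 k (hkk'.trans hk'i)
    omega
  -- disjointness of the two images
  have key : ∀ c, c < A → ∀ k, k < i → h c ≠ g k := by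
    intro c hc k hk
    have hbk := hb1 k hk.le
    have hbki := hmono k i hk.le le_rfl
    by_cases hcase : b k - (k+1) ≤ c
    · have hsub : ((range i).filter (fun k' => c < b k' - (k'+1))) ⊆ Ico (k+1) i := by
        intro k' hk'
        simp only [mem_filter, mem_range] at hk'
        simp only [mem_Ico]
        refine ⟨?_, hk'.1⟩
        by_contra hle
        push_neg at hle
        have := hlen k' k (by omega) hk.le
        omega
      have hL := (card_le_card hsub).trans_eq (Nat.card_Ico _ _)
      simp only [hh, hg]
      omega
    · push_neg at hcase
      have hsub : Ico k i ⊆ ((range i).filter fun k' => c < b k' - (k'+1)) := by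
        intro k' hk'
        simp only [mem_Ico] at hk'
        simp only [mem_filter, mem_range]
        refine ⟨hk'.2, ?_⟩
        have := hlen k k' hk'.1 hk'.2.le
        omega
      have hL := (Nat.card_Ico _ _) ▸ card_le_card hsub
      simp only [hh, hg]
      omega
  have hanti : ∀ c c', c < c' → c' < A → h c' < h c := by
    intro c c' hlt hA'
    have hsub : ((range i).filter (fun k => c' < b k - (k+1))) ⊆
        ((range i).filter (fun k => c < b k - (k+1))) := by
      intro k hk
      simp only [mem_filter, mem_range] at hk ⊢
      exact ⟨hk.1, by omega⟩
    have := card_le_card hsub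
    simp only [hh]
    omega
  have hinj : ∀ c ∈ range A, ∀ c' ∈ range A, h c = h c' → c = c' := by
    intro c hc c' hc' he
    simp only [mem_range] at hc hc'
    by_contra hne
    rcases Nat.lt_or_ge c c' with hlt | hge
    · exact absurd he (by have := hanti c c' hlt hc'; omega)
    · have hlt : c' < c := by omega
      exact absurd he (by have := hanti c' c hlt hc; omega)
  have hbmono : ∀ k, k < i → b k < b i := by
    intro k hk
    have := hmono k i hk.le le_rfl
    omega
  have ginj : ∀ k ∈ range i, ∀ k' ∈ range i, g k = g k' → k = k' := by
    intro k hk k' hk' he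
    simp only [mem_range] at hk hk'
    by_contra hne
    rcases Nat.lt_or_ge k k' with hlt | hge
    · have h1 := hmono k k' hlt.le hk'.le
      have h2 := hbmono k' hk'
      simp only [hg] at he
      omega
    · have hlt : k' < k := by omega
      have h1 := hmono k' k hlt.le hk.le
      have h2 := hbmono k hk
      simp only [hg] at he
      omega
  have himg : ∀ c ∈ range A, h c ∈ Icc 1 (b i - 1) := by
    intro c hc
    simp only [mem_range] at hc
    have hLle : ((range i).filter (fun k => c < b k - (k+1))).card ≤ i := by
      simpa using card_le_card (filter_subset _ (range i))
    simp only [mem_Icc, hh]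
    omega
  have gimg : ∀ k ∈ range i, g k ∈ Icc 1 (b i - 1) := by
    intro k hk
    simp only [mem_range] at hk
    have := hbmono k hk
    have := hb1 k hk.le
    simp only [mem_Icc, hg]
    omega
  set S := (range A).image h with hS
  set T := (range i).image g with hT
  have hST : Disjoint S T := by
    rw [Finset.disjoint_left]
    intro x hx hx'
    obtain ⟨c, hc, rfl⟩ := mem_image.mp hx
    obtain ⟨k, hk, hgk⟩ := mem_image.mp hx'
    exact key c (mem_range.mp hc) k (mem_range.mp hk) hgk.symm
  have hcardS : S.card = A := by rw [hS, card_image_of_injOn hinj, card_range]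
  have hcardT : T.card = i := by rw [hT, card_image_of_injOn ginj, card_range]
  have hsub : S ∪ T ⊆ Icc 1 (b i - 1) := by
    apply union_subset
    · exact image_subset_iff.mpr himg
    · exact image_subset_iff.mpr gimg
  have hunion : S ∪ T = Icc 1 (b i - 1) := by
    apply Finset.eq_of_subset_of_card_le hsub
    rw [card_union_of_disjoint hST, hcardS, hcardT, Nat.card_Icc]
    omega
  calc (∏ c ∈ range A, h c) * ∏ k ∈ range i, g k
      = (∏ x ∈ S, x) * (∏ x ∈ T, x) := by
        rw [hS, hT, prod_image hinj, prod_image ginj]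
    _ = ∏ x ∈ S ∪ T, x := (prod_union hST).symm
    _ = ∏ x ∈ Icc 1 (b i - 1), x := by rw [hunion]
    _ = Nat.factorial (b i - 1) := prod_Icc_id_fact _


section
variable {n : ℕ} {a : Fin n → ℕ}

lemma extSeq_lt {m : ℕ} (hm : m < n) : extSeq n a m = a ⟨m, hm⟩ := by
  simp [extSeq, hm]

lemma extSeq_gap (ha : StrictMono a) : ∀ k k', k ≤ k' → k' < n →
    extSeq n a k + (k' - k) ≤ extSeq n a k' := by
  intro k k' hkk' hk'
  induction k' with
  | zero =>
    have : k = 0 := by omega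
    subst this; simp
  | succ m ih =>
    rcases Nat.eq_or_lt_of_le hkk' with rfl | h
    · simp
    · have hm : m < n := by omega
      have h1 := ih (by omega) hm
      have h2 : extSeq n a m < extSeq n a (m + 1) := by
        rw [extSeq_lt hm, extSeq_lt hk']
        exact ha (show (⟨m, hm⟩ : Fin n) < ⟨m + 1, hk'⟩ from by simp [Fin.lt_def])
      omega

lemma mem_cellsOf (h2 : ∀ i : Fin n, a i ≤ 2 * (i : ℕ) + 1) (u : ℕ × ℕ) :
    u ∈ cellsOf n a ↔ u.1 < n ∧ u.2 < extSeq n a (n - 1 - u.1) - (n - u.1) := by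
  simp only [cellsOf, mem_filter, mem_product, mem_range]
  constructor
  · rintro ⟨⟨hu1, _⟩, h3⟩; exact ⟨hu1, h3⟩
  · rintro ⟨hu1, hu2⟩
    refine ⟨⟨hu1, ?_⟩, hu2⟩
    have hidx : n - 1 - u.1 < n := by omega
    rw [extSeq_lt hidx] at hu2
    have := h2 ⟨n - 1 - u.1, hidx⟩
    simp only at this
    omega

lemma hookLen_cellsOf (h2 : ∀ i : Fin n, a i ≤ 2 * (i : ℕ) + 1) {r c : ℕ} (hr : r < n)
    (hc : c < extSeq n a (n - 1 - r) - (n - r)) :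
    hookLen (cellsOf n a) (r, c) = (extSeq n a (n - 1 - r) - (n - r) - c) +
      ((Ioo r n).filter fun r' => c < extSeq n a (n - 1 - r') - (n - r')).card := by
  rw [hookLen]
  congr 1
  · have he : ((cellsOf n a).filter fun v => v.1 = (r, c).1 ∧ (r, c).2 ≤ v.2) =
        (Ico c (extSeq n a (n - 1 - r) - (n - r))).image (fun c' => (r, c')) := by
      ext ⟨v1, v2⟩
      simp only [mem_filter, mem_cellsOf h2, mem_image, mem_Ico]
      constructor
      · rintro ⟨⟨hv1, hv2⟩, rfl, hcv⟩
        exact ⟨v2, ⟨hcv, hv2⟩, rfl⟩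
      · rintro ⟨c', ⟨hc1, hc2⟩, he⟩
        obtain ⟨rfl, rfl⟩ := Prod.mk.injEq .. ▸ he
        exact ⟨⟨hr, hc2⟩, rfl, hc1⟩
    rw [he, card_image_of_injective _ (fun x y hxy => (Prod.mk.injEq .. ▸ hxy).2),
      Nat.card_Ico]
  · have he : ((cellsOf n a).filter fun v => v.2 = (r, c).2 ∧ (r, c).1 < v.1) =
        (((Ioo r n).filter fun r' => c < extSeq n a (n - 1 - r') - (n - r')).image
          (fun r' => (r', c))) := by
      ext ⟨v1, v2⟩
      simp only [mem_filter, mem_cellsOf h2, mem_image, mem_Ioo]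
      constructor
      · rintro ⟨⟨hv1, hv2⟩, rfl, hrv⟩
        exact ⟨v1, ⟨⟨hrv, hv1⟩, hv2⟩, rfl⟩
      · rintro ⟨r', ⟨⟨hr1, hr2⟩, hr3⟩, he⟩
        obtain ⟨rfl, rfl⟩ := Prod.mk.injEq .. ▸ he
        exact ⟨⟨hr2, hr3⟩, rfl, hr1⟩
    rw [he, card_image_of_injective _ (fun x y hxy => (Prod.mk.injEq .. ▸ hxy).1)]

lemma hookProd_cellsOf (ha : StrictMono a) (h1 : ∀ i, 1 ≤ a i)
    (h2 : ∀ i : Fin n, a i ≤ 2 * (i : ℕ) + 1) :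
    hookProd (cellsOf n a) *
      ∏ i ∈ range n, ∏ k ∈ range i, (extSeq n a i - extSeq n a k)
      = ∏ i ∈ range n, Nat.factorial (extSeq n a i - 1) := by
  have hb1 : ∀ k, k < n → k + 1 ≤ extSeq n a k := by
    intro k hk
    have hg := extSeq_gap ha 0 k (Nat.zero_le k) hk
    have h0 : 1 ≤ extSeq n a 0 := by
      rw [extSeq_lt (by omega)]
      exact h1 _
    omega
  -- decompose cells into rows
  have hdecomp : cellsOf n a = (range n).biUnion
      (fun r => (range (extSeq n a (n - 1 - r) - (n - r))).image (fun c => (r, c))) := by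
    ext ⟨u1, u2⟩
    simp only [mem_cellsOf h2, mem_biUnion, mem_image, mem_range]
    constructor
    · rintro ⟨hu1, hu2⟩
      exact ⟨u1, hu1, u2, hu2, rfl⟩
    · rintro ⟨r, hr, c, hc, he⟩
      obtain ⟨rfl, rfl⟩ := Prod.mk.injEq .. ▸ he
      exact ⟨hr, hc⟩
  have hdisj : (↑(range n) : Set ℕ).PairwiseDisjoint
      (fun r => (range (extSeq n a (n - 1 - r) - (n - r))).image (fun c => (r, c))) := by
    intro x hx y hy hxy
    simp only [Function.onFun, disjoint_left]
    rintro ⟨p1, p2⟩ hp hp'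
    simp only [mem_image, mem_range] at hp hp'
    obtain ⟨c, _, he⟩ := hp
    obtain ⟨c', _, he'⟩ := hp'
    obtain ⟨rfl, rfl⟩ := Prod.mk.injEq .. ▸ he
    obtain ⟨rfl, -⟩ := Prod.mk.injEq .. ▸ he'
    exact hxy rfl
  set G : ℕ → ℕ := fun i => ∏ c ∈ range (extSeq n a i - (i + 1)),
      ((extSeq n a i - (i + 1) - c) + ((range i).filter (fun k => c < extSeq n a k - (k + 1))).card) with hG
  have hp1 : hookProd (cellsOf n a) = ∏ r ∈ range n, G (n - 1 - r) := by
    rw [hookProd]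
    nth_rewrite 1 [hdecomp]
    rw [prod_biUnion hdisj]
    refine prod_congr rfl ?_
    intro r hr
    rw [mem_range] at hr
    rw [prod_image (fun x _ y _ hxy => (Prod.mk.injEq .. ▸ hxy).2)]
    have hnr : n - r = (n - 1 - r) + 1 := by omega
    refine prod_congr (by rw [hnr]) ?_
    intro c hc
    rw [mem_range] at hc
    have hc' : c < extSeq n a (n - 1 - r) - (n - r) := by omega
    rw [hookLen_cellsOf h2 hr hc']
    congr 1
    · omega
    · refine Finset.card_nbij' (fun r' => n - 1 - r') (fun k => n - 1 - k) ?_ ?_ ?_ ?_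
      · intro r' hr'
        simp only [coe_filter, Set.mem_setOf_eq, mem_filter, mem_Ioo, mem_range] at hr' ⊢
        obtain ⟨⟨hrr', hr'n⟩, hcr'⟩ := hr'
        have e : n - r' = (n - 1 - r') + 1 := by omega
        rw [e] at hcr'
        exact ⟨by omega, hcr'⟩
      · intro k hk
        simp only [coe_filter, Set.mem_setOf_eq, mem_filter, mem_Ioo, mem_range] at hk ⊢
        obtain ⟨hki, hck⟩ := hk
        have e1 : n - 1 - (n - 1 - k) = k := by omega
        have e2 : n - (n - 1 - k) = k + 1 := by omega
        rw [e1, e2]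
        exact ⟨⟨by omega, by omega⟩, hck⟩
      · intro r' hr'
        simp only [coe_filter, Set.mem_setOf_eq, mem_filter, mem_Ioo] at hr'
        dsimp only
        omega
      · intro k hk
        simp only [coe_filter, Set.mem_setOf_eq, mem_filter, mem_range] at hk
        dsimp only
        omega
  rw [hp1, prod_range_reflect G n, ← prod_mul_distrib]
  refine prod_congr rfl ?_
  intro i hi
  rw [mem_range] at hi
  exact row_identity i (extSeq n a) (fun k hk => hb1 k (by omega))
    (fun k k' hkk' hk'i => by
      exact extSeq_gap ha k k' hkk' (by omega))

end

open Polynomial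

theorem prod_Ico_Ico_comm' {M : Type*} [CommMonoid M] (a b : ℕ) (f : ℕ → ℕ → M) :
    (∏ i ∈ Finset.Ico a b, ∏ j ∈ Finset.Ico (i + 1) b, f i j) =
      ∏ j ∈ Finset.Ico a b, ∏ i ∈ Finset.Ico a j, f i j := by
  rw [Finset.prod_sigma', Finset.prod_sigma']
  refine prod_nbij' (fun x ↦ ⟨x.2, x.1⟩) (fun x ↦ ⟨x.2, x.1⟩) ?_ ?_ (fun _ _ ↦ rfl) (fun _ _ ↦ rfl)
    (fun _ _ ↦ rfl) <;>
  simp only [Finset.mem_Ico, Sigma.forall, Finset.mem_sigma] <;>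
  rintro a b ⟨⟨h₁, h₂⟩, ⟨h₃, h₄⟩⟩ <;>
  omega

lemma prod_Ioi_fin {M : Type*} [CommMonoid M] {n : ℕ} (i : Fin n) (f : ℕ → M) :
    ∏ j ∈ Finset.Ioi i, f (j : ℕ) = ∏ j ∈ Finset.Ico ((i : ℕ) + 1) n, f j := by
  refine prod_nbij (fun j => (j : ℕ)) ?_ ?_ ?_ (fun _ _ => rfl)
  · intro j hj
    simp only [mem_Ioi, Fin.lt_def] at hj
    simp only [mem_Ico]
    exact ⟨hj, j.isLt⟩
  · intro x hx y hy hxy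
    exact Fin.val_injective hxy
  · intro j' hj'
    simp only [coe_Ico, Set.mem_Ico] at hj'
    exact ⟨⟨j', hj'.2⟩, Finset.mem_Ioi.mpr (by rw [Fin.lt_def]; simpa using hj'.1), rfl⟩

lemma fin_triangle_prod {M : Type*} [CommMonoid M] {n : ℕ} (f : ℕ → ℕ → M) :
    ∏ i : Fin n, ∏ j ∈ Finset.Ioi i, f (j : ℕ) (i : ℕ) =
      ∏ i ∈ Finset.range n, ∏ k ∈ Finset.range i, f i k := by
  calc ∏ i : Fin n, ∏ j ∈ Finset.Ioi i, f (j : ℕ) (i : ℕ)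
      = ∏ i ∈ Finset.range n, ∏ j ∈ Finset.Ico (i + 1) n, f j i := by
        rw [← Fin.prod_univ_eq_prod_range]
        exact Finset.prod_congr rfl fun i _ => prod_Ioi_fin i (fun j => f j (i : ℕ))
    _ = ∏ j ∈ Finset.range n, ∏ i ∈ Finset.range j, f j i := by
        simp only [Finset.range_eq_Ico]
        exact prod_Ico_Ico_comm' 0 n fun i j => f j i

lemma coeff_prod_sum {R : Type*} [CommSemiring R] {ι : Type*} (s : Finset ι)
    (f : ι → Polynomial R) (d : ι → ℕ) (h : ∀ i ∈ s, (f i).natDegree ≤ d i) :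
    (∏ i ∈ s, f i).coeff (∑ i ∈ s, d i) = ∏ i ∈ s, (f i).coeff (d i) := by
  induction s using Finset.cons_induction with
  | empty => simp
  | cons a s ha ih =>
    rw [Finset.prod_cons, Finset.sum_cons, Finset.prod_cons,
      Polynomial.coeff_mul_add_eq_of_natDegree_le (h a (mem_cons_self a s))
        ((Polynomial.natDegree_prod_le _ _).trans (Finset.sum_le_sum fun i hi => h i (mem_cons.2 (Or.inr hi)))),
      ih (fun i hi => h i (mem_cons.2 (Or.inr hi)))]


lemma det_factorial_matrix {n : ℕ} (a : Fin n → ℕ) (h1 : ∀ i, 1 ≤ a i) :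
    Matrix.det (Matrix.of fun i j : Fin n =>
      if (j : ℕ) + 1 ≤ a i then (1 : ℚ) / ((a i - ((j : ℕ) + 1)).factorial : ℚ) else 0) =
    (∏ i : Fin n, (1:ℚ)/((a i - 1).factorial : ℚ)) *
      ∏ i : Fin n, ∏ j ∈ Finset.Ioi i, ((a j : ℚ) - (a i : ℚ)) := by
  set p : Fin n → ℚ[X] := fun j => ∏ s ∈ range (j:ℕ), (X - C (s:ℚ)) with hp
  have hpm : ∀ j, (p j).Monic := fun j => monic_prod_of_monic _ _ fun s _ => monic_X_sub_C _
  have hpd : ∀ j : Fin n, (p j).natDegree = (j:ℕ) := by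
    intro j
    rw [hp, Polynomial.natDegree_prod]
    · simp only [natDegree_X_sub_C, Finset.sum_const, smul_eq_mul, mul_one, Finset.card_range]
    · intro s _; exact X_sub_C_ne_zero _
  have hfact : ∀ (m j : ℕ), j ≤ m → ∏ s ∈ Finset.range j, ((m:ℚ) - s) =
      (Nat.factorial m : ℚ)/((Nat.factorial (m-j) : ℚ)) := by
    intro m j hj
    have h1' : ∏ s ∈ Finset.range j, ((m:ℚ) - s) = ((m.descFactorial j : ℕ) : ℚ) := by
      rw [Nat.descFactorial_eq_prod_range, Nat.cast_prod]
      refine Finset.prod_congr rfl fun s hs => ?_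
      rw [mem_range] at hs
      rw [Nat.cast_sub (by omega)]
    rw [h1', eq_div_iff (by exact_mod_cast Nat.factorial_ne_zero _), ← Nat.cast_mul,
      mul_comm, Nat.factorial_mul_descFactorial hj]
  have heval : ∀ (i j : Fin n), (p j).eval ((a i : ℚ) - 1) =
      ∏ s ∈ Finset.range (j:ℕ), ((a i : ℚ) - 1 - s) := by
    intro i j; rw [hp]; simp [Polynomial.eval_prod]
  have hent : ∀ i j : Fin n,
      (if (j : ℕ) + 1 ≤ a i then (1 : ℚ) / ((a i - ((j : ℕ) + 1)).factorial : ℚ) else 0)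
      = (1/((Nat.factorial (a i - 1) : ℚ))) * (p j).eval ((a i : ℚ) - 1) := by
    intro i j
    rw [heval]
    have hai := h1 i
    by_cases hij : (j:ℕ)+1 ≤ a i
    · rw [if_pos hij]
      have hcast : ∏ s ∈ Finset.range (j:ℕ), ((a i : ℚ) - 1 - s) =
          ∏ s ∈ Finset.range (j:ℕ), (((a i - 1 : ℕ) : ℚ) - s) := by
        refine Finset.prod_congr rfl fun s _ => ?_
        rw [Nat.cast_sub hai]; push_cast; ring
      rw [hcast, hfact (a i - 1) (j:ℕ) (by omega)]
      have he : a i - ((j:ℕ)+1) = a i - 1 - (j:ℕ) := by omega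
      rw [he]
      have hne1 : (Nat.factorial (a i - 1) : ℚ) ≠ 0 := by exact_mod_cast Nat.factorial_ne_zero _
      have hne2 : (Nat.factorial (a i - 1 - (j:ℕ)) : ℚ) ≠ 0 := by
        exact_mod_cast Nat.factorial_ne_zero _
      field_simp
    · rw [if_neg hij]
      symm
      apply mul_eq_zero_of_right
      apply Finset.prod_eq_zero (i := a i - 1)
      · rw [mem_range]; omega
      · rw [Nat.cast_sub hai]; push_cast; ring
  have hmat : (Matrix.of fun i j : Fin n =>
      if (j : ℕ) + 1 ≤ a i then (1 : ℚ) / ((a i - ((j : ℕ) + 1)).factorial : ℚ) else 0) =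
      Matrix.of (fun i j : Fin n => (1:ℚ)/(Nat.factorial (a i - 1):ℚ) *
        (Matrix.of fun i j : Fin n => (p j).eval ((a i:ℚ)-1)) i j) := by
    ext i j
    exact hent i j
  rw [hmat, Matrix.det_mul_column,
    ← Matrix.det_eval_matrixOfPolynomials_eq_det_vandermonde (fun i => (a i : ℚ) - 1) p hpd hpm,
    Matrix.det_vandermonde]
  congr 1
  refine Finset.prod_congr rfl fun i _ => Finset.prod_congr rfl fun j _ => by ring


section MainProof
variable {n : ℕ} {a : Fin n → ℕ}

lemma a_ge_extseq (ha : StrictMono a) (h1 : ∀ i, 1 ≤ a i) (i : Fin n) :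
    (i : ℕ) + 1 ≤ a i := by
  have hg := extSeq_gap ha 0 (i : ℕ) (Nat.zero_le _) i.isLt
  have hn : 0 < n := by omega
  rw [extSeq_lt hn, extSeq_lt i.isLt] at hg
  have h0 := h1 ⟨0, hn⟩
  simp only [Fin.eta] at hg
  omega

lemma extSeq_eq (i : Fin n) : extSeq n a (i : ℕ) = a i := by
  rw [extSeq_lt i.isLt]


/-- The polynomial `det(binom(t+i-1, aᵢ-j))` has degree `d = ∑(aᵢ-i)` in `t`, with
leading coefficient `det(1/(aᵢ-j)!) = 1/H_{Y(a)}`. -/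
theorem det_binomial_poly_degree_leadingCoeff (n : ℕ) (a : Fin n → ℕ) (ha : StrictMono a)
    (h1 : ∀ i, 1 ≤ a i) (h2 : ∀ i : Fin n, a i ≤ 2 * (i : ℕ) + 1) :
    let D : Polynomial ℚ := Matrix.det (Matrix.of fun i j : Fin n =>
      if (j : ℕ) + 1 ≤ a i then
        Polynomial.C ((1 : ℚ) / ((a i - ((j : ℕ) + 1)).factorial : ℚ)) *
          ∏ s ∈ Finset.range (a i - ((j : ℕ) + 1)),
            (Polynomial.X + Polynomial.C ((i : ℚ) - s))
      else 0)
    D.natDegree = ∑ i : Fin n, (a i - ((i : ℕ) + 1)) ∧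
    D.leadingCoeff = Matrix.det (Matrix.of fun i j : Fin n =>
      if (j : ℕ) + 1 ≤ a i then (1 : ℚ) / ((a i - ((j : ℕ) + 1)).factorial : ℚ) else 0) ∧
    Matrix.det (Matrix.of fun i j : Fin n =>
      if (j : ℕ) + 1 ≤ a i then (1 : ℚ) / ((a i - ((j : ℕ) + 1)).factorial : ℚ) else 0) =
      (1 : ℚ) / hookProd (cellsOf n a) := by
  intro D
  set L : Matrix (Fin n) (Fin n) ℚ := Matrix.of fun i j : Fin n =>
    if (j : ℕ) + 1 ≤ a i then (1 : ℚ) / ((a i - ((j : ℕ) + 1)).factorial : ℚ) else 0 with hL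
  set P : Matrix (Fin n) (Fin n) ℚ[X] := Matrix.of fun i j : Fin n =>
    if (j : ℕ) + 1 ≤ a i then
      Polynomial.C ((1 : ℚ) / ((a i - ((j : ℕ) + 1)).factorial : ℚ)) *
        ∏ s ∈ Finset.range (a i - ((j : ℕ) + 1)),
          (Polynomial.X + Polynomial.C ((i : ℚ) - s))
    else 0 with hP
  set d : ℕ := ∑ i : Fin n, (a i - ((i : ℕ) + 1)) with hd
  have hai1 : ∀ i : Fin n, (i : ℕ) + 1 ≤ a i := a_ge_extseq ha h1
  -- Part A, cast to ℚ with Fin-indexed products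
  have hA := hookProd_cellsOf ha h1 h2
  have hPQ : ((∏ i ∈ range n, ∏ k ∈ range i, (extSeq n a i - extSeq n a k) : ℕ) : ℚ) =
      ∏ i : Fin n, ∏ j ∈ Finset.Ioi i, ((a j : ℚ) - (a i : ℚ)) := by
    rw [Nat.cast_prod]
    have : ∀ i ∈ range n, ((∏ k ∈ range i, (extSeq n a i - extSeq n a k) : ℕ) : ℚ) =
        ∏ k ∈ range i, ((extSeq n a i : ℚ) - (extSeq n a k : ℚ)) := by
      intro i hi
      rw [mem_range] at hi
      rw [Nat.cast_prod]
      refine Finset.prod_congr rfl fun k hk => ?_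
      rw [mem_range] at hk
      have := extSeq_gap ha k i (by omega) hi
      rw [Nat.cast_sub (by omega)]
    rw [Finset.prod_congr rfl this,
      ← fin_triangle_prod (fun i k => (extSeq n a i : ℚ) - (extSeq n a k : ℚ))]
    refine Finset.prod_congr rfl fun i _ => Finset.prod_congr rfl fun j hj => ?_
    rw [extSeq_eq, extSeq_eq]
  have hFQ : ((∏ i ∈ range n, Nat.factorial (extSeq n a i - 1) : ℕ) : ℚ) =
      ∏ i : Fin n, ((Nat.factorial (a i - 1) : ℕ) : ℚ) := by
    rw [Nat.cast_prod, ← Fin.prod_univ_eq_prod_range (fun m => ((Nat.factorial (extSeq n a m - 1) : ℕ) : ℚ)) n]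
    refine Finset.prod_congr rfl fun i _ => by rw [extSeq_eq]
  have hH0 : hookProd (cellsOf n a) ≠ 0 := by
    intro h0
    rw [h0, zero_mul] at hA
    exact absurd hA.symm (Finset.prod_ne_zero_iff.mpr fun i _ => Nat.factorial_ne_zero _)
  have hHQ : (hookProd (cellsOf n a) : ℚ) ≠ 0 := Nat.cast_ne_zero.mpr hH0
  -- Part 3 : det L = 1 / hookProd
  have hdetL : L.det = (1 : ℚ) / hookProd (cellsOf n a) := by
    rw [hL, det_factorial_matrix a h1, eq_div_iff hHQ]
    have hcast : (hookProd (cellsOf n a) : ℚ) *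
        (∏ i : Fin n, ∏ j ∈ Finset.Ioi i, ((a j : ℚ) - (a i : ℚ))) =
        ∏ i : Fin n, ((Nat.factorial (a i - 1) : ℕ) : ℚ) := by
      rw [← hPQ, ← hFQ, ← Nat.cast_mul, hA]
    calc (∏ i : Fin n, (1:ℚ)/((a i - 1).factorial : ℚ)) *
          (∏ i : Fin n, ∏ j ∈ Finset.Ioi i, ((a j : ℚ) - (a i : ℚ))) * (hookProd (cellsOf n a) : ℚ)
        = (∏ i : Fin n, (1:ℚ)/((a i - 1).factorial : ℚ)) *
          ((hookProd (cellsOf n a) : ℚ) * ∏ i : Fin n, ∏ j ∈ Finset.Ioi i, ((a j : ℚ) - (a i : ℚ))) := by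
          ring
      _ = (∏ i : Fin n, (1:ℚ)/((a i - 1).factorial : ℚ)) *
          ∏ i : Fin n, ((Nat.factorial (a i - 1) : ℕ) : ℚ) := by rw [hcast]
      _ = ∏ i : Fin n, ((1:ℚ)/((a i - 1).factorial : ℚ) * ((Nat.factorial (a i - 1) : ℕ) : ℚ)) := by
          rw [Finset.prod_mul_distrib]
      _ = 1 := by
          rw [Finset.prod_eq_one]
          intro i _
          exact one_div_mul_cancel (by exact_mod_cast Nat.factorial_ne_zero _)
  -- degree and coefficient bounds for entries
  have hPdeg : ∀ i j : Fin n, (P i j).natDegree ≤ a i - ((j : ℕ) + 1) := by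
    intro i j
    rw [hP]
    simp only [Matrix.of_apply]
    by_cases hij : (j : ℕ) + 1 ≤ a i
    · rw [if_pos hij]
      refine (natDegree_C_mul_le _ _).trans ?_
      refine (natDegree_prod_le _ _).trans ?_
      refine le_trans (Finset.sum_le_sum (g := fun _ => 1)
        (fun s _ => le_of_eq (natDegree_X_add_C _))) ?_
      rw [Finset.sum_const, smul_eq_mul, mul_one, card_range]
    · rw [if_neg hij]
      simp
  have hPcoeff : ∀ i j : Fin n, (P i j).coeff (a i - ((j : ℕ) + 1)) = L i j := by
    intro i j
    rw [hP, hL]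
    simp only [Matrix.of_apply]
    by_cases hij : (j : ℕ) + 1 ≤ a i
    · rw [if_pos hij, if_pos hij, coeff_C_mul]
      have hm : (∏ s ∈ Finset.range (a i - ((j:ℕ)+1)), (X + C ((i:ℚ) - s))).Monic :=
        monic_prod_of_monic _ _ fun s _ => monic_X_add_C _
      have hdeg : (∏ s ∈ Finset.range (a i - ((j:ℕ)+1)), (X + C ((i:ℚ) - s))).natDegree
          = a i - ((j:ℕ)+1) := by
        rw [natDegree_prod_of_monic _ _ fun s _ => monic_X_add_C _]
        simp only [natDegree_X_add_C, Finset.sum_const, smul_eq_mul, mul_one, card_range]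
      have hc := hm.coeff_natDegree
      rw [hdeg] at hc
      rw [hc, mul_one]
    · rw [if_neg hij, if_neg hij, coeff_zero]
  -- per-permutation facts
  have hterm : ∀ σ : Equiv.Perm (Fin n),
      (∏ i, P (σ i) i).coeff d = (∏ i, L (σ i) i) ∧ (∏ i, P (σ i) i).natDegree ≤ d := by
    intro σ
    by_cases hgood : ∀ i : Fin n, (i : ℕ) + 1 ≤ a (σ i)
    · have hsum : ∑ i : Fin n, (a (σ i) - ((i : ℕ) + 1)) = d := by
        rw [Finset.sum_tsub_distrib _ fun i _ => hgood i, hd,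
          Finset.sum_tsub_distrib _ fun i _ => hai1 i, Equiv.sum_comp σ a]
      constructor
      · rw [← hsum, coeff_prod_sum _ _ _ fun i _ => hPdeg (σ i) i]
        exact Finset.prod_congr rfl fun i _ => hPcoeff (σ i) i
      · refine (natDegree_prod_le _ _).trans ?_
        rw [← hsum]
        exact Finset.sum_le_sum fun i _ => hPdeg (σ i) i
    · push_neg at hgood
      obtain ⟨i0, hi0⟩ := hgood
      have hP0 : P (σ i0) i0 = 0 := by
        rw [hP]; simp only [Matrix.of_apply]; rw [if_neg (by omega)]
      have hL0 : L (σ i0) i0 = 0 := by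
        rw [hL]; simp only [Matrix.of_apply]; rw [if_neg (by omega)]
      constructor
      · rw [Finset.prod_eq_zero (f := fun i => P (σ i) i) (Finset.mem_univ i0) hP0,
          Finset.prod_eq_zero (f := fun i => L (σ i) i) (Finset.mem_univ i0) hL0, coeff_zero]
      · rw [Finset.prod_eq_zero (f := fun i => P (σ i) i) (Finset.mem_univ i0) hP0]
        simp
  have hDdef : D = P.det := by rw [hP]
  have hcoeffD : D.coeff d = L.det := by
    rw [hDdef, Matrix.det_apply' P, Polynomial.finset_sum_coeff, Matrix.det_apply' L]
    refine Finset.sum_congr rfl fun σ _ => ?_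
    rw [← Polynomial.C_eq_intCast, Polynomial.coeff_C_mul, (hterm σ).1]
  have hdegD : D.natDegree ≤ d := by
    rw [hDdef, Matrix.det_apply' P]
    refine natDegree_sum_le_of_forall_le _ _ fun σ _ => ?_
    refine le_trans Polynomial.natDegree_mul_le ?_
    rw [Polynomial.natDegree_intCast]
    simpa using (hterm σ).2
  have hne : L.det ≠ 0 := by
    rw [hdetL]
    exact one_div_ne_zero hHQ
  have hdegD' : D.natDegree = d :=
    le_antisymm hdegD (le_natDegree_of_ne_zero (by rw [hcoeffD]; exact hne))
  refine ⟨hdegD', ?_, hdetL⟩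
  rw [Polynomial.leadingCoeff, hdegD', hcoeffD]

end MainProof
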